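/- For all integers n ≥ 1 and all integers q with 1 ≤ q ≤ 2^{n−1}, the complement of the projective rank of the fraction graph E_{2^n/q} satisfies ξ̄_f(E_{2^n/q}) = 2^n/q. -/

import Mathlib

open Filter

/-- A bundled finite simple graph. -/
structure FinGraph where
  V : Type
  [fintypeV : Fintype V]
  G : SimpleGraph V

attribute [instance] FinGraph.fintypeV

namespace FinGraph

/-- Helper constructor. -/
def mk' (V : Type) [Fintype V] (G : SimpleGraph V) : FinGraph := ⟨V, G⟩

/-- Strong product of simple graphs. -/
def strongProdAdj {α β : Type} (G : SimpleGraph α) (H : SimpleGraph β) :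
    SimpleGraph (α × β) where
  Adj x y := x ≠ y ∧ (G.Adj x.1 y.1 ∨ x.1 = y.1) ∧ (H.Adj x.2 y.2 ∨ x.2 = y.2)
  symm := by
    refine ⟨?_⟩; rintro x y ⟨hne, h1, h2⟩
    refine ⟨hne.symm, ?_, ?_⟩
    · rcases h1 with h | h
      · exact Or.inl h.symm
      · exact Or.inr h.symm
    · rcases h2 with h | h
      · exact Or.inl h.symm
      · exact Or.inr h.symm
  loopless := by refine ⟨?_⟩; rintro x ⟨h, -⟩; exact h rfl

/-- The `n`-th strong power of a simple graph, on vertex set `Fin n → α`. -/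
def strongPowAdj {α : Type} (G : SimpleGraph α) (n : ℕ) : SimpleGraph (Fin n → α) where
  Adj x y := x ≠ y ∧ ∀ i, G.Adj (x i) (y i) ∨ x i = y i
  symm := by
    refine ⟨?_⟩; rintro x y ⟨hne, h⟩
    refine ⟨hne.symm, fun i => ?_⟩
    rcases h i with h' | h'
    · exact Or.inl h'.symm
    · exact Or.inr h'.symm
  loopless := by refine ⟨?_⟩; rintro x ⟨h, -⟩; exact h rfl

/-- Disjoint union of simple graphs. -/
def disjUnionAdj {α β : Type} (G : SimpleGraph α) (H : SimpleGraph β) :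
    SimpleGraph (α ⊕ β) where
  Adj x y := (∃ a b, x = Sum.inl a ∧ y = Sum.inl b ∧ G.Adj a b) ∨
             (∃ a b, x = Sum.inr a ∧ y = Sum.inr b ∧ H.Adj a b)
  symm := by
    refine ⟨?_⟩; rintro x y (⟨a, b, rfl, rfl, h⟩ | ⟨a, b, rfl, rfl, h⟩)
    · exact Or.inl ⟨b, a, rfl, rfl, h.symm⟩
    · exact Or.inr ⟨b, a, rfl, rfl, h.symm⟩
  loopless := by
    refine ⟨?_⟩; rintro x (⟨a, b, rfl, h, hadj⟩ | ⟨a, b, rfl, h, hadj⟩)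
    · cases Sum.inl.inj h; exact hadj.ne rfl
    · cases Sum.inr.inj h; exact hadj.ne rfl

/-- Bundled strong product `G ⊠ H`. -/
def sprod (A B : FinGraph) : FinGraph := mk' (A.V × B.V) (strongProdAdj A.G B.G)

/-- Bundled `n`-th strong power `G^{⊠ n}`. -/
def spow (A : FinGraph) (n : ℕ) : FinGraph := mk' (Fin n → A.V) (strongPowAdj A.G n)

/-- Bundled disjoint union `G ⊔ H`. -/
def dUnion (A B : FinGraph) : FinGraph := mk' (A.V ⊕ B.V) (disjUnionAdj A.G B.G)

/-- Bundled complement graph. -/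
def compl (A : FinGraph) : FinGraph := mk' A.V A.Gᶜ

/-- Graph join `G + H`: the complement of the disjoint union of the complements. -/
def join (A B : FinGraph) : FinGraph := (A.compl.dUnion B.compl).compl

/-- The edgeless graph `E_n` on `n` vertices. -/
def edgeless (n : ℕ) : FinGraph := mk' (Fin n) ⊥

/-- `cohomLE A B`: there is a cohomomorphism from `A` to `B`, i.e. a graph homomorphism
from the complement of `A` to the complement of `B`. -/
def cohomLE (A B : FinGraph) : Prop := Nonempty (A.Gᶜ →g B.Gᶜ)

/-- Asymptotic cohomomorphism preorder: `A ≲ B` iff there is `f : ℕ → ℕ` with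
`f n / n → 0` and `A^{⊠ n} ≤ B^{⊠ (n + f n)}` for all `n`. -/
def asympCohomLE (A B : FinGraph) : Prop :=
  ∃ f : ℕ → ℕ, Tendsto (fun n => (f n : ℝ) / (n : ℝ)) atTop (nhds 0) ∧
    ∀ n, cohomLE (A.spow n) (B.spow (n + f n))

/-- The asymptotic spectrum of graphs `Δ(𝒢)`: nonnegative real graph parameters that are
normalised on edgeless graphs, multiplicative under the strong product, additive under
disjoint union, and monotone under cohomomorphism. -/
def Delta : Set (FinGraph → ℝ) :=
  { f | (∀ A, 0 ≤ f A) ∧ (∀ n : ℕ, f (edgeless n) = n) ∧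
        (∀ A B, f (A.sprod B) = f A * f B) ∧
        (∀ A B, f (A.dUnion B) = f A + f B) ∧
        (∀ A B, cohomLE A B → f A ≤ f B) }

/-- Vertex-transitivity of a bundled graph. -/
def IsVertexTransitive (A : FinGraph) : Prop :=
  ∀ u v : A.V, ∃ e : A.G ≃g A.G, e u = v

/-- Cyclic distance between `i, j ∈ {0, …, p-1}` modulo `p`. -/
def cycDist (p i j : ℕ) : ℕ := min ((p + i - j) % p) ((p + j - i) % p)

/-- The fraction graph `E_{p/q}`: vertex set `ℤ_p`, distinct vertices adjacent iff
their cyclic distance modulo `p` is strictly less than `q`. -/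
def fracGraph (p q : ℕ) : FinGraph :=
  mk' (Fin p)
    { Adj := fun i j => i ≠ j ∧ cycDist p i j < q
      symm := by
        refine ⟨?_⟩; rintro i j ⟨hne, hd⟩
        exact ⟨hne.symm, by simpa [cycDist, min_comm] using hd⟩
      loopless := ⟨fun i h => h.1 rfl⟩ }

/-- The complement of the projective rank `ξ̄_f(G)`: the infimum of `d/r` over all
assignments of `r`-dimensional subspaces of `ℂ^d` to the vertices such that distinct
non-adjacent vertices receive orthogonal subspaces. -/
noncomputable def xibar (A : FinGraph) : ℝ :=
  sInf { x : ℝ | ∃ d r : ℕ, 0 < d ∧ 0 < r ∧ x = (d : ℝ) / (r : ℝ) ∧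
    ∃ W : A.V → Submodule ℂ (EuclideanSpace ℂ (Fin d)),
      (∀ v, Module.finrank ℂ (W v) = r) ∧
      ∀ v w : A.V, v ≠ w → ¬ A.G.Adj v w →
        ∀ x ∈ W v, ∀ y ∈ W w, (inner ℂ x y : ℂ) = 0 }

end FinGraph

open FinGraph

section Aux

open Finset Module Submodule

private lemma sum_range_two_mul (m : ℕ) (g : ℕ → ℕ) :
    ∑ i ∈ Finset.range (2 * m), g i
      = ∑ i ∈ Finset.range m, g (2 * i) + ∑ i ∈ Finset.range m, g (2 * i + 1) := by
  induction m with
  | zero => simp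
  | succ m ih =>
    rw [show 2 * (m + 1) = (2 * m) + 1 + 1 by ring, Finset.sum_range_succ,
      Finset.sum_range_succ, ih, Finset.sum_range_succ, Finset.sum_range_succ]
    omega

private lemma sum_range_shift (p : ℕ) (g : ℕ → ℕ) (hg : g p = g 0) :
    ∑ i ∈ Finset.range p, g (i + 1) = ∑ i ∈ Finset.range p, g i := by
  have h1 := Finset.sum_range_succ' g p
  have h2 := Finset.sum_range_succ g p
  omega

private lemma sum_finrank_le_finrank_sup {d : ℕ}
    (W : ℕ → Submodule ℂ (EuclideanSpace ℂ (Fin d))) (s : Finset ℕ)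
    (h : ∀ i ∈ s, ∀ j ∈ s, i ≠ j → Submodule.IsOrtho (W i) (W j)) :
    ∑ i ∈ s, Module.finrank ℂ (W i) ≤ Module.finrank ℂ (s.sup W : Submodule ℂ _) := by
  induction s using Finset.cons_induction with
  | empty => simp
  | cons a s ha ih =>
    rw [Finset.sum_cons, Finset.sup_cons]
    have hOrth : Submodule.IsOrtho (s.sup W) (W a) := by
      refine Finset.sup_le fun j hj => ?_
      exact h j (Finset.mem_cons.2 (Or.inr hj)) a (Finset.mem_cons_self a s)
        (by rintro rfl; exact ha hj)
    have hinf : W a ⊓ s.sup W = ⊥ := (hOrth.symm.disjoint).eq_bot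
    have hsum := Submodule.finrank_sup_add_finrank_inf_eq (W a) (s.sup W)
    rw [hinf, finrank_bot, add_zero] at hsum
    rw [hsum]
    exact Nat.add_le_add_left
      (ih fun i hi j hj hij =>
        h i (Finset.mem_cons.2 (Or.inr hi)) j (Finset.mem_cons.2 (Or.inr hj)) hij) _

private lemma mod_eval {p A : ℕ} (hp : 0 < p) (h : A < 2 * p) :
    A % p = if A < p then A else A - p := by
  split_ifs with h'
  · exact Nat.mod_eq_of_lt h'
  · rw [Nat.mod_eq_sub_mod (by omega), Nat.mod_eq_of_lt (by omega)]

private lemma cycDist_ge (p q a s : ℕ) (hq : 1 ≤ q) (hqp : 2 * q ≤ p) (ha : a < p)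
    (hs1 : q ≤ s) (hs2 : s ≤ p - q) :
    (a + s) % p ≠ a ∧ q ≤ cycDist p a ((a + s) % p) := by
  have hp : 0 < p := by omega
  have hb : (a + s) % p = if a + s < p then a + s else a + s - p := mod_eval hp (by omega)
  set b := (a + s) % p with hbdef
  have hblt : b < p := Nat.mod_lt _ hp
  have e1 : (p + a - b) % p = if p + a - b < p then p + a - b else p + a - b - p :=
    mod_eval hp (by omega)
  have e2 : (p + b - a) % p = if p + b - a < p then p + b - a else p + b - a - p :=
    mod_eval hp (by omega)
  refine ⟨by split_ifs at hb <;> omega, ?_⟩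
  simp only [cycDist]
  rw [e1, e2, Nat.le_min]
  split_ifs at hb ⊢ <;> omega

private lemma interval_disjoint (p q a b s t : ℕ) (hqp : 2 * q ≤ p) (ha : a < p) (hb : b < p)
    (hs : s < q) (ht : t < q) (hd : q ≤ cycDist p a b) : (a + s) % p ≠ (b + t) % p := by
  have hp : 0 < p := by omega
  intro hEq
  simp only [cycDist] at hd
  rw [Nat.le_min] at hd
  obtain ⟨hd1, hd2⟩ := hd
  rw [mod_eval hp (by omega)] at hd1
  rw [mod_eval hp (by omega)] at hd2
  rw [mod_eval hp (by omega), mod_eval hp (by omega)] at hEq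
  split_ifs at hd1 hd2 hEq <;> omega

private lemma core (n : ℕ) : ∀ (q d : ℕ), 1 ≤ q → 2 * q ≤ 2 ^ n →
    ∀ W : ℕ → Submodule ℂ (EuclideanSpace ℂ (Fin d)),
    (∀ i, W (i + 2 ^ n) = W i) →
    (∀ i s, q ≤ s → s ≤ 2 ^ n - q → Submodule.IsOrtho (W i) (W (i + s))) →
    ∑ i ∈ Finset.range (2 ^ n), Module.finrank ℂ (W i) ≤ q * d := by
  induction n with
  | zero => intro q d hq hqp; omega
  | succ n IH =>
    intro q d hq hqp W hper horth
    have hpp : (2:ℕ) ^ (n + 1) = 2 * 2 ^ n := by ring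
    -- handler for even windows at level n+1
    have heven : ∀ q' : ℕ, 1 ≤ q' → 2 * q' ≤ 2 ^ n →
        ∀ W' : ℕ → Submodule ℂ (EuclideanSpace ℂ (Fin d)),
        (∀ i, W' (i + 2 ^ (n + 1)) = W' i) →
        (∀ i s, 2 * q' ≤ s → s ≤ 2 ^ (n + 1) - 2 * q' →
          Submodule.IsOrtho (W' i) (W' (i + s))) →
        ∑ i ∈ Finset.range (2 ^ (n + 1)), Module.finrank ℂ (W' i) ≤ 2 * q' * d := by
      intro q' hq' hq'p W' hper' horth'
      have hE := IH q' d hq' hq'p (fun i => W' (2 * i))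
        (by intro i
            show W' (2 * (i + 2 ^ n)) = W' (2 * i)
            rw [show 2 * (i + 2 ^ n) = 2 * i + 2 ^ (n + 1) by ring, hper'])
        (by intro i s hs1 hs2
            have h := horth' (2 * i) (2 * s) (by omega) (by omega)
            rw [show 2 * i + 2 * s = 2 * (i + s) by ring] at h
            exact h)
      have hO := IH q' d hq' hq'p (fun i => W' (2 * i + 1))
        (by intro i
            show W' (2 * (i + 2 ^ n) + 1) = W' (2 * i + 1)
            rw [show 2 * (i + 2 ^ n) + 1 = (2 * i + 1) + 2 ^ (n + 1) by ring, hper'])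
        (by intro i s hs1 hs2
            have h := horth' (2 * i + 1) (2 * s) (by omega) (by omega)
            rw [show 2 * i + 1 + 2 * s = 2 * (i + s) + 1 by ring] at h
            exact h)
      rw [hpp, sum_range_two_mul]
      linarith
    rcases Nat.even_or_odd q with he | ho
    · obtain ⟨q', rfl⟩ := he
      rw [show (q' + q') * d = 2 * q' * d by ring]
      exact heven q' (by omega) (by omega) W hper
        (fun i s h1 h2 => horth i s (by omega) (by omega))
    · obtain ⟨k, rfl⟩ := ho
      rcases Nat.eq_zero_or_pos k with rfl | hk1
      · -- q = 1 : pairwise orthogonal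
        have hpair : ∀ i ∈ Finset.range (2 ^ (n + 1)), ∀ j ∈ Finset.range (2 ^ (n + 1)),
            i ≠ j → Submodule.IsOrtho (W i) (W j) := by
          intro i hi j hj hne
          rw [Finset.mem_range] at hi hj
          rcases Nat.lt_or_ge i j with hlt | hge
          · have h := horth i (j - i) (by omega) (by omega)
            rw [show i + (j - i) = j by omega] at h
            exact h
          · have h := horth j (i - j) (by omega) (by omega)
            rw [show j + (i - j) = i by omega] at h
            exact h.symm
        calc ∑ i ∈ Finset.range (2 ^ (n + 1)), Module.finrank ℂ (W i)
            ≤ Module.finrank ℂ ((Finset.range (2 ^ (n + 1))).sup W : Submodule ℂ _) :=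
              sum_finrank_le_finrank_sup W _ hpair
          _ ≤ Module.finrank ℂ (EuclideanSpace ℂ (Fin d)) := Submodule.finrank_le _
          _ = d := finrank_euclideanSpace_fin
          _ ≤ (2 * 0 + 1) * d := by omega
      · -- q = 2k+1, k ≥ 1
        have hq3 : 3 ≤ 2 * k + 1 := by omega
        have hn2 : 2 ≤ n := by
          rcases Nat.lt_or_ge n 2 with h | h
          · exfalso
            have : (2:ℕ) ^ (n + 1) ≤ 2 ^ 2 := Nat.pow_le_pow_right (by norm_num) (by omega)
            simp at this; omega
          · exact h
        obtain ⟨m, hm⟩ : ∃ m, n = m + 1 := ⟨n - 1, by omega⟩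
        have h2n : (2:ℕ) ^ n = 2 * 2 ^ m := by rw [hm, pow_succ]; ring
        have hqlt : 2 * k + 1 + 1 ≤ 2 ^ n := by omega
        set P : ℕ → Submodule ℂ (EuclideanSpace ℂ (Fin d)) :=
          fun i => W i ⊔ W (i + 1) with hPdef
        set Q : ℕ → Submodule ℂ (EuclideanSpace ℂ (Fin d)) :=
          fun i => W i ⊓ W (i + 1) with hQdef
        have hperP : ∀ i, P (i + 2 ^ (n + 1)) = P i := by
          intro i
          show W (i + 2 ^ (n + 1)) ⊔ W (i + 2 ^ (n + 1) + 1) = W i ⊔ W (i + 1)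
          rw [hper i, show i + 2 ^ (n + 1) + 1 = (i + 1) + 2 ^ (n + 1) by ring, hper]
        have hperQ : ∀ i, Q (i + 2 ^ (n + 1)) = Q i := by
          intro i
          show W (i + 2 ^ (n + 1)) ⊓ W (i + 2 ^ (n + 1) + 1) = W i ⊓ W (i + 1)
          rw [hper i, show i + 2 ^ (n + 1) + 1 = (i + 1) + 2 ^ (n + 1) by ring, hper]
        have horthP : ∀ i s, 2 * (k + 1) ≤ s → s ≤ 2 ^ (n + 1) - 2 * (k + 1) →
            Submodule.IsOrtho (P i) (P (i + s)) := by
          intro i s hs1 hs2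
          show Submodule.IsOrtho (W i ⊔ W (i + 1)) (W (i + s) ⊔ W (i + s + 1))
          rw [Submodule.isOrtho_sup_left]
          constructor <;> rw [Submodule.isOrtho_sup_right] <;> constructor
          · exact horth i s (by omega) (by omega)
          · have h := horth i (s + 1) (by omega) (by omega)
            rw [show i + (s + 1) = i + s + 1 by omega] at h; exact h
          · have h := horth (i + 1) (s - 1) (by omega) (by omega)
            rw [show i + 1 + (s - 1) = i + s by omega] at h; exact h
          · have h := horth (i + 1) s (by omega) (by omega)
            rw [show i + 1 + s = i + s + 1 by omega] at h; exact h
        have horthQ : ∀ i s, 2 * k ≤ s → s ≤ 2 ^ (n + 1) - 2 * k →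
            Submodule.IsOrtho (Q i) (Q (i + s)) := by
          intro i s hs1 hs2
          show Submodule.IsOrtho (W i ⊓ W (i + 1)) (W (i + s) ⊓ W (i + s + 1))
          rcases Nat.lt_or_ge s (2 * k + 1) with hlt | hge
          · -- s = 2k : use W i ⟂ W (i + s + 1)
            have h := horth i (s + 1) (by omega) (by omega)
            rw [show i + (s + 1) = i + s + 1 by omega] at h
            exact h.mono inf_le_left inf_le_right
          · rcases le_or_gt s (2 ^ (n + 1) - (2 * k + 1)) with hle | hgt
            · exact (horth i s hge hle).mono inf_le_left inf_le_left
            · -- s = 2^(n+1) - 2k : use W (i+1) ⟂ W (i + s)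
              have h := horth (i + 1) (s - 1) (by omega) (by omega)
              rw [show i + 1 + (s - 1) = i + s by omega] at h
              exact h.mono inf_le_right inf_le_left
        have hP := heven (k + 1) (by omega) (by omega) P hperP horthP
        have hQ := heven k (by omega) (by omega) Q hperQ horthQ
        have hsum : ∀ i : ℕ, Module.finrank ℂ (P i) + Module.finrank ℂ (Q i)
            = Module.finrank ℂ (W i) + Module.finrank ℂ (W (i + 1)) := fun i =>
          Submodule.finrank_sup_add_finrank_inf_eq (W i) (W (i + 1))
        have hshift : ∑ i ∈ Finset.range (2 ^ (n + 1)), Module.finrank ℂ (W (i + 1))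
            = ∑ i ∈ Finset.range (2 ^ (n + 1)), Module.finrank ℂ (W i) := by
          refine sum_range_shift _ (fun i => Module.finrank ℂ (W i)) ?_
          show Module.finrank ℂ (W (2 ^ (n + 1))) = Module.finrank ℂ (W 0)
          rw [show (2:ℕ) ^ (n + 1) = 0 + 2 ^ (n + 1) by omega, hper]
        have htot : ∑ i ∈ Finset.range (2 ^ (n + 1)), Module.finrank ℂ (P i)
            + ∑ i ∈ Finset.range (2 ^ (n + 1)), Module.finrank ℂ (Q i)
            = 2 * ∑ i ∈ Finset.range (2 ^ (n + 1)), Module.finrank ℂ (W i) := by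
          rw [← Finset.sum_add_distrib]
          rw [Finset.sum_congr rfl (fun i _ => hsum i), Finset.sum_add_distrib, hshift]
          ring
        linarith

private lemma lower_aux (n q d r : ℕ) (hq : 1 ≤ q) (hqp : 2 * q ≤ 2 ^ n)
    (W : Fin (2 ^ n) → Submodule ℂ (EuclideanSpace ℂ (Fin d)))
    (hrk : ∀ v, Module.finrank ℂ (W v) = r)
    (horth : ∀ v w : Fin (2 ^ n), v ≠ w → ¬ (fracGraph (2 ^ n) q).G.Adj v w →
      ∀ x ∈ W v, ∀ y ∈ W w, (inner ℂ x y : ℂ) = 0) :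
    2 ^ n * r ≤ q * d := by
  have hp : 0 < 2 ^ n := pow_pos (by norm_num) n
  have hcore := core n q d hq hqp (fun i => W ⟨i % 2 ^ n, Nat.mod_lt _ hp⟩)
    (by intro i
        show W ⟨(i + 2 ^ n) % 2 ^ n, _⟩ = W ⟨i % 2 ^ n, _⟩
        congr 1
        exact Fin.ext (Nat.add_mod_right i (2 ^ n)))
    (by intro i s hs1 hs2
        obtain ⟨hne, hdist⟩ :=
          cycDist_ge (2 ^ n) q (i % 2 ^ n) s hq hqp (Nat.mod_lt _ hp) hs1 hs2
        rw [Nat.mod_add_mod] at hne hdist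
        rw [Submodule.isOrtho_iff_inner_eq]
        intro x hx y hy
        refine horth ⟨i % 2 ^ n, Nat.mod_lt _ hp⟩ ⟨(i + s) % 2 ^ n, Nat.mod_lt _ hp⟩
          (fun hc => hne (congrArg Fin.val hc).symm) ?_ x hx y hy
        intro hadj
        have hlt : cycDist (2 ^ n) (i % 2 ^ n) ((i + s) % 2 ^ n) < q := hadj.2
        omega)
  have hsum : (∑ i ∈ Finset.range (2 ^ n),
      Module.finrank ℂ (W ⟨i % 2 ^ n, Nat.mod_lt i hp⟩)) = 2 ^ n * r := by
    rw [Finset.sum_congr rfl fun i _ => hrk ⟨i % 2 ^ n, Nat.mod_lt i hp⟩,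
      Finset.sum_const, Finset.card_range, smul_eq_mul]
  rw [← hsum]
  exact hcore

private lemma upper_aux (n q : ℕ) (hq : 1 ≤ q) (hqp : 2 * q ≤ 2 ^ n) :
    ∃ W : Fin (2 ^ n) → Submodule ℂ (EuclideanSpace ℂ (Fin (2 ^ n))),
      (∀ v, Module.finrank ℂ (W v) = q) ∧
      ∀ v w : Fin (2 ^ n), v ≠ w → ¬ (fracGraph (2 ^ n) q).G.Adj v w →
        ∀ x ∈ W v, ∀ y ∈ W w, (inner ℂ x y : ℂ) = 0 := by
  classical
  set p := 2 ^ n with hpd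
  have hp : 0 < p := pow_pos (by norm_num) n
  have hqlt : q < p := by omega
  set E := EuclideanSpace.basisFun (Fin p) ℂ with hE
  have honb : Orthonormal ℂ (⇑E) := E.orthonormal
  set idx : Fin p → Fin q → Fin p := fun v t => v + ⟨t.1, by omega⟩ with hidx
  have hval : ∀ (v : Fin p) (t : Fin q), (idx v t).1 = (v.1 + t.1) % p := by
    intro v t
    simp only [hidx, Fin.val_add]
  refine ⟨fun v => Submodule.span ℂ (Set.range fun t => E (idx v t)), ?_, ?_⟩
  · intro v
    have hinj : Function.Injective (idx v) := by
      intro t1 t2 h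
      have h1 := t1.2
      have h2 := t2.2
      have h3 := v.2
      have hv : (v.1 + t1.1) % p = (v.1 + t2.1) % p := by
        rw [← hval, ← hval, h]
      rw [mod_eval hp (by omega), mod_eval hp (by omega)] at hv
      have : t1.1 = t2.1 := by split_ifs at hv <;> omega
      exact Fin.ext this
    have hon : Orthonormal ℂ (fun t => E (idx v t)) := honb.comp (idx v) hinj
    rw [finrank_span_eq_card hon.linearIndependent]
    simp
  · intro v w hvw hnadj
    have hd : q ≤ cycDist p v.1 w.1 := by
      by_contra hlt
      push_neg at hlt
      exact hnadj ⟨hvw, hlt⟩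
    have hOrtho : Submodule.IsOrtho
        (Submodule.span ℂ (Set.range fun t => E (idx v t)))
        (Submodule.span ℂ (Set.range fun t => E (idx w t))) := by
      rw [Submodule.isOrtho_span]
      rintro _ ⟨s, rfl⟩ _ ⟨t, rfl⟩
      have hne : idx v s ≠ idx w t := by
        have hdisj := interval_disjoint p q v.1 w.1 s.1 t.1 hqp v.2 w.2 s.2 t.2 hd
        intro hcontra
        exact hdisj (by rw [← hval, ← hval, hcontra])
      have hite := orthonormal_iff_ite.mp honb (idx v s) (idx w t)
      rw [if_neg hne] at hite
      exact hite
    intro x hx y hy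
    exact Submodule.isOrtho_iff_inner_eq.mp hOrtho x hx y hy

end Aux


/-- For all `n ≥ 1` and `1 ≤ q ≤ 2^(n-1)`, the complement of the projective rank of the
fraction graph `E_{2^n / q}` equals `2^n / q`. -/
theorem xibar_fracGraph_pow_two (n q : ℕ) (hn : 1 ≤ n) (hq : 1 ≤ q)
    (hq' : q ≤ 2 ^ (n - 1)) :
    xibar (fracGraph (2 ^ n) q) = (2 ^ n : ℝ) / (q : ℝ) := by
  classical
  have hpow2 : (2:ℕ) ^ n = 2 * 2 ^ (n - 1) := by
    obtain ⟨m, hm⟩ : ∃ m, n = m + 1 := ⟨n - 1, by omega⟩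
    rw [hm, pow_succ]
    simp
    ring
  have hqp : 2 * q ≤ 2 ^ n := by omega
  have hp : 0 < 2 ^ n := pow_pos (by norm_num) n
  obtain ⟨W₀, hW₀rk, hW₀orth⟩ := upper_aux n q hq hqp
  have hxq : ((2:ℝ) ^ n) / (q : ℝ) = ((2 ^ n : ℕ) : ℝ) / ((q : ℕ) : ℝ) := by push_cast; ring
  have hlb : ∀ (d r : ℕ) (W : Fin (2 ^ n) → Submodule ℂ (EuclideanSpace ℂ (Fin d))),
      0 < r → (∀ v, Module.finrank ℂ (W v) = r) →
      (∀ v w : Fin (2 ^ n), v ≠ w → ¬ (fracGraph (2 ^ n) q).G.Adj v w →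
        ∀ x ∈ W v, ∀ y ∈ W w, (inner ℂ x y : ℂ) = 0) →
      ((2:ℝ) ^ n) / (q : ℝ) ≤ (d : ℝ) / (r : ℝ) := by
    intro d r W hr hrk horth
    have hkey := lower_aux n q d r hq hqp W hrk horth
    rw [div_le_div_iff₀ (by positivity) (by exact_mod_cast hr)]
    have : ((2 ^ n * r : ℕ) : ℝ) ≤ ((q * d : ℕ) : ℝ) := Nat.cast_le.mpr hkey
    push_cast at this
    linarith
  unfold xibar
  apply le_antisymm
  · refine csInf_le ⟨((2:ℝ) ^ n) / (q : ℝ), ?_⟩ ?_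
    · rintro x ⟨d, r, hd0, hr0, rfl, W, hrk, horth⟩
      exact hlb d r W hr0 hrk horth
    · exact ⟨2 ^ n, q, hp, hq, hxq, W₀, hW₀rk, hW₀orth⟩
  · refine le_csInf ⟨_, ⟨2 ^ n, q, hp, hq, rfl, W₀, hW₀rk, hW₀orth⟩⟩ ?_
    rintro x ⟨d, r, hd0, hr0, rfl, W, hrk, horth⟩
    exact hlb d r W hr0 hrk horth
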